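/- Modular bound for accumulated strains: let M* be an N-function satisfying the Δ₂-condition with constant c and function h ∈ L¹(Ω), h ≥ 0, let T > 0, let a₀ : Ω → S³ satisfy ∫_Ω M*(x, a₀(x)) dx < ∞, and let g : Q → S³ be measurable with ∫_Q M*(x, g(x,t)) dx dt < ∞. Define a(x,t) = a₀(x) + ∫₀ᵗ g(x,s) ds. Then there exists a constant C, depending only on c, T and ∫_Ω h dx, such that ∫_Q M*(x, a(x,t)) dx dt ≤ C (1 + ∫_Ω M*(x, a₀(x)) dx + ∫_Q M*(x, g(x,t)) dx dt); in particular ∫_Q M*(x, a) dx dt < ∞. -/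

import Mathlib

open MeasureTheory Filter Set Topology

noncomputable section

/-- `ℝ³`, the ambient space of the material body `Ω`. -/
abbrev E3 := EuclideanSpace ℝ (Fin 3)

/-- `3 × 3` real matrices. -/
abbrev Mat3 := Matrix (Fin 3) (Fin 3) ℝ

instance : MeasurableSpace Mat3 := inferInstanceAs (MeasurableSpace (Fin 3 → Fin 3 → ℝ))

/-- The Frobenius inner product `ξ : η` on matrices. -/
def mdot (ξ η : Mat3) : ℝ := ∑ i, ∑ j, ξ i j * η i j

/-- The Frobenius norm `|ξ|` of a matrix. -/
def mnorm (ξ : Mat3) : ℝ := Real.sqrt (mdot ξ ξ)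

/-- `S³`: the set of symmetric `3 × 3` real matrices. -/
def Sym3 : Set Mat3 := {A | A.IsSymm}

/-- `S³_d`: the set of symmetric traceless `3 × 3` real matrices. -/
def Sym3d : Set Mat3 := {A | A.IsSymm ∧ A.trace = 0}

/-- `M : Ω × S³ → [0,∞)` is an `N`-function: Carathéodory (measurable in `x`,
continuous in `ξ`), vanishing exactly at `0`, even, convex in `ξ`, with
`M(x,ξ)/|ξ| → 0` as `|ξ| → 0` and `M(x,ξ)/|ξ| → ∞` as `|ξ| → ∞`. -/
structure IsNFunction (Ω : Set E3) (M : E3 → Mat3 → ℝ) : Prop where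
  nonneg : ∀ x ξ, 0 ≤ M x ξ
  meas : ∀ ξ, Measurable fun x => M x ξ
  cont : ∀ x, ContinuousOn (M x) Sym3
  zero_iff : ∀ x ∈ Ω, ∀ ξ ∈ Sym3, (M x ξ = 0 ↔ ξ = 0)
  even : ∀ x ∈ Ω, ∀ ξ ∈ Sym3, M x (-ξ) = M x ξ
  convexOn : ∀ x, ConvexOn ℝ Sym3 (M x)
  tendsto_zero : ∀ x ∈ Ω,
    Tendsto (fun ξ => M x ξ / mnorm ξ) (nhdsWithin 0 (Sym3 \ {0})) (nhds 0)
  tendsto_top : ∀ x ∈ Ω,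
    Tendsto (fun ξ => M x ξ / mnorm ξ) ((comap mnorm atTop) ⊓ Filter.principal Sym3) atTop

/-- The complementary function `M*(x,η) = sup_{ξ ∈ S³} (ξ:η − M(x,ξ))`. -/
def complFn (M : E3 → Mat3 → ℝ) (x : E3) (η : Mat3) : ℝ :=
  ⨆ ξ : Sym3, (mdot ξ.1 η - M x ξ.1)

attribute [local instance] Matrix.normedAddCommGroup Matrix.normedSpace
instance : TopologicalSpace.MetrizableSpace Mat3 :=
  inferInstanceAs (TopologicalSpace.MetrizableSpace (Fin 3 → Fin 3 → ℝ))
instance : SecondCountableTopology Mat3 :=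
  inferInstanceAs (SecondCountableTopology (Fin 3 → Fin 3 → ℝ))
instance : BorelSpace Mat3 := inferInstanceAs (BorelSpace (Fin 3 → Fin 3 → ℝ))
instance : CompleteSpace Mat3 := inferInstanceAs (CompleteSpace (Fin 3 → Fin 3 → ℝ))
open scoped ENNReal NNReal in
instance : ESeminormedAddMonoid Mat3 :=
  { (SeminormedAddGroup.toContinuousENorm : ContinuousENorm Mat3), (inferInstance : AddMonoid Mat3) with
    enorm_zero := by
      change ((‖(0:Mat3)‖₊ : ℝ≥0) : ℝ≥0∞) = 0
      simp
    enorm_add_le := fun x y => by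
      change ((‖x + y‖₊ : ℝ≥0) : ℝ≥0∞) ≤ (‖x‖₊ : ℝ≥0∞) + (‖y‖₊ : ℝ≥0∞)
      exact_mod_cast nnnorm_add_le x y }

lemma isClosed_sym3 : IsClosed Sym3 := by
  have h : Sym3 = {A : Mat3 | A.transpose = A} := rfl
  rw [h]
  refine isClosed_eq ?_ continuous_id
  exact continuous_pi fun i => continuous_pi fun j =>
    (continuous_apply i).comp (continuous_apply j)

lemma mnorm_nonneg (ξ : Mat3) : 0 ≤ mnorm ξ := Real.sqrt_nonneg _

lemma norm_le_mnorm (ξ : Mat3) : ‖ξ‖ ≤ mnorm ξ := by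
  rw [show (‖ξ‖ : ℝ) = ‖ξ‖ from rfl]
  refine (Matrix.norm_le_iff (mnorm_nonneg ξ)).2 fun j k => ?_
  have h1 : |ξ j k| = Real.sqrt ((ξ j k) * (ξ j k)) := by
    rw [← Real.sqrt_mul_self_eq_abs]
  rw [Real.norm_eq_abs, h1]
  apply Real.sqrt_le_sqrt
  unfold mdot
  have h2 : (ξ j k) * (ξ j k) ≤ ∑ l, ξ j l * ξ j l := by
    apply Finset.single_le_sum (f := fun l => ξ j l * ξ j l)
      (fun l _ => mul_self_nonneg _) (Finset.mem_univ k)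
  refine h2.trans ?_
  apply Finset.single_le_sum (f := fun i => ∑ l, ξ i l * ξ i l)
    (fun i _ => Finset.sum_nonneg fun l _ => mul_self_nonneg _) (Finset.mem_univ j)

lemma measurable_mstar_comp {M : E3 → Mat3 → ℝ}
    (hmeas : ∀ ξ, Measurable fun x => M x ξ) (hcont : ∀ x, ContinuousOn (M x) Sym3)
    {α : Type*} [MeasurableSpace α] {w : α → E3} {v : α → Mat3}
    (hw : Measurable w) (hv : Measurable v) (hvs : ∀ a, v a ∈ Sym3) :
    Measurable fun a => M (w a) (v a) := by
  have hu : Measurable (Function.uncurry fun (ξ : Sym3) (x : E3) => M x ξ.1) := by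
    apply measurable_uncurry_of_continuous_of_measurable
    · intro x
      exact continuousOn_iff_continuous_restrict.mp (hcont x)
    · intro ξ; exact hmeas ξ.1
  have hm : Measurable fun a => ((⟨v a, hvs a⟩ : Sym3), w a) :=
    (hv.subtype_mk).prodMk hw
  exact hu.comp hm

lemma ae_fst {α β : Type*} [MeasurableSpace α] [MeasurableSpace β]
    {μ : Measure α} {ν : Measure β} [SFinite ν] {p : α → Prop}
    (h : ∀ᵐ x ∂μ, p x) : ∀ᵐ q ∂μ.prod ν, p q.1 := by
  rw [ae_iff] at h ⊢
  have hs : {q : α × β | ¬ p q.1} = {x | ¬ p x} ×ˢ (univ : Set β) := by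
    ext ⟨x, y⟩; simp
  rw [hs]
  calc μ.prod ν ({x | ¬ p x} ×ˢ univ) = μ {x | ¬ p x} * ν univ := Measure.prod_prod _ _
    _ = 0 := by rw [h, zero_mul]

lemma sym3_smul {r : ℝ} {A : Mat3} (hA : A ∈ Sym3) : r • A ∈ Sym3 := Matrix.IsSymm.smul hA r
lemma sym3_add {A B : Mat3} (hA : A ∈ Sym3) (hB : B ∈ Sym3) : A + B ∈ Sym3 := hA.add hB
lemma sym3_zero : (0 : Mat3) ∈ Sym3 := Matrix.isSymm_zero

/-- Coercivity extraction. -/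
lemma exists_coercive {M : Mat3 → ℝ} (hnn : ∀ ξ, 0 ≤ M ξ)
    (htop : Tendsto (fun ξ => M ξ / mnorm ξ) ((comap mnorm atTop) ⊓ Filter.principal Sym3) atTop) :
    ∃ R : ℝ, 0 ≤ R ∧ ∀ ξ ∈ Sym3, ‖ξ‖ ≤ R + M ξ := by
  have h1 : ∀ᶠ ξ in (comap mnorm atTop) ⊓ Filter.principal Sym3, 1 ≤ M ξ / mnorm ξ :=
    htop.eventually (eventually_ge_atTop 1)
  rw [eventually_inf_principal] at h1
  rw [eventually_comap] at h1
  rw [eventually_atTop] at h1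
  obtain ⟨R₁, hR₁⟩ := h1
  refine ⟨max R₁ 1, le_trans zero_le_one (le_max_right _ _), fun ξ hξ => ?_⟩
  rcases le_or_gt (mnorm ξ) (max R₁ 1) with hle | hlt
  · exact le_add_of_le_of_nonneg ((norm_le_mnorm ξ).trans hle) (hnn ξ)
  · have hm1 : (1:ℝ) ≤ mnorm ξ := (le_max_right _ _).trans hlt.le
    have hq : 1 ≤ M ξ / mnorm ξ :=
      hR₁ (mnorm ξ) ((le_max_left _ _).trans hlt.le) ξ rfl hξ
    have hpos : 0 < mnorm ξ := lt_of_lt_of_le zero_lt_one hm1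
    have : mnorm ξ ≤ M ξ := by
      rwa [le_div_iff₀ hpos, one_mul] at hq
    exact (norm_le_mnorm ξ).trans (this.trans
      (le_add_of_nonneg_left (le_trans zero_le_one (le_max_right _ _))))

/-- Iterated Δ₂. -/
lemma delta2_iter {M : Mat3 → ℝ} {c' hx : ℝ} (hc' : 1 ≤ c') (hh : 0 ≤ hx)
    (hnn : ∀ ξ, 0 ≤ M ξ)
    (hd : ∀ ξ ∈ Sym3, M ((2:ℝ) • ξ) ≤ c' * M ξ + hx) :
    ∀ n : ℕ, ∀ ξ ∈ Sym3, M (((2:ℝ)^n) • ξ) ≤ c'^n * M ξ + n * c'^n * hx := by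
  intro n
  induction n with
  | zero => intro ξ hξ; simp
  | succ n ih =>
    intro ξ hξ
    have h2 : ((2:ℝ)^(n+1)) • ξ = (2:ℝ) • (((2:ℝ)^n) • ξ) := by
      rw [smul_smul, pow_succ, mul_comm]
    have hξn : ((2:ℝ)^n) • ξ ∈ Sym3 := sym3_smul hξ
    have hcn : (1:ℝ) ≤ c'^n := one_le_pow₀ hc'
    calc M (((2:ℝ)^(n+1)) • ξ) = M ((2:ℝ) • (((2:ℝ)^n) • ξ)) := by rw [h2]
      _ ≤ c' * M (((2:ℝ)^n) • ξ) + hx := hd _ hξn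
      _ ≤ c' * (c'^n * M ξ + n * c'^n * hx) + hx := by
          have := ih ξ hξ
          nlinarith [hnn (((2:ℝ)^n) • ξ), hc']
      _ ≤ c'^(n+1) * M ξ + (n+1 : ℕ) * c'^(n+1) * hx := by
          push_cast
          have h1 : (0:ℝ) ≤ c'^n := le_trans zero_le_one hcn
          have h3 : c'^(n+1) = c'^n * c' := pow_succ c' n
          have h2' : (1:ℝ) ≤ c'^n * c' := by nlinarith
          rw [h3]
          nlinarith [mul_nonneg (sub_nonneg.mpr h2') hh]

def entryCLM (j k : Fin 3) : Mat3 →L[ℝ] ℝ where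
  toFun A := A j k
  map_add' := by intros; rfl
  map_smul' := by intros; rfl
  cont := (continuous_apply k).comp (continuous_apply j)

lemma integral_entry {μ : Measure ℝ} {φ : ℝ → Mat3} (hφ : Integrable φ μ) (j k : Fin 3) :
    (∫ s, φ s ∂μ) j k = ∫ s, φ s j k ∂μ :=
  ((entryCLM j k).integral_comp_comm hφ).symm

lemma pointwise_bound {M : Mat3 → ℝ} {c' hx T t : ℝ} {k : ℕ}
    (hc' : 1 ≤ c') (hh : 0 ≤ hx)
    (hnn : ∀ ξ, 0 ≤ M ξ) (hconv : ConvexOn ℝ Sym3 M) (hcont : ContinuousOn M Sym3)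
    (hM0 : M 0 = 0)
    (hd : ∀ ξ ∈ Sym3, M ((2:ℝ) • ξ) ≤ c' * M ξ + hx)
    (ht : 0 < t) (htT : t < T) (hTk : T ≤ 2^k)
    {gx : ℝ → Mat3} (hgs : ∀ s, gx s ∈ Sym3)
    (hgi : IntegrableOn gx (Ioo 0 T)) (hMgi : IntegrableOn (fun s => M (gx s)) (Ioo 0 T))
    {a0x : Mat3} (ha0 : a0x ∈ Sym3) :
    M (a0x + ∫ s in Ioo 0 t, gx s) ≤
      (c'/2) * M a0x + ((1 + (k+1 : ℝ) * c'^(k+1))/2) * hx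
        + (c'^(k+1)/2) * ∫ s in Ioo 0 T, M (gx s) := by
  set τ : ℝ := (2:ℝ)^k with hτdef
  have hτ1 : (1:ℝ) ≤ τ := one_le_pow₀ one_le_two
  have hτpos : (0:ℝ) < τ := lt_of_lt_of_le one_pos hτ1
  set μτ : Measure ℝ := volume.restrict (Ioo (0:ℝ) τ) with hμτ
  haveI : IsFiniteMeasure μτ := ⟨by
    rw [hμτ, Measure.restrict_apply_univ]; exact measure_Ioo_lt_top⟩
  haveI : NeZero μτ := ⟨by
    refine Measure.measure_univ_ne_zero.mp ?_
    rw [hμτ, Measure.restrict_apply_univ, Real.volume_Ioo, sub_zero]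
    simp [ENNReal.ofReal_eq_zero, not_le, hτpos]⟩
  have hsub : Ioo (0:ℝ) t ⊆ Ioo 0 T := Ioo_subset_Ioo_right htT.le
  have hsubτ : Ioo (0:ℝ) t ⊆ Ioo 0 τ := Ioo_subset_Ioo_right (htT.le.trans hTk)
  set f : ℝ → Mat3 := (Ioo (0:ℝ) t).indicator gx with hfdef
  have hfi : Integrable f μτ :=
    ((hgi.mono_set hsub).integrable_indicator measurableSet_Ioo).restrict
  have hMf : (fun s => M (f s)) = (Ioo (0:ℝ) t).indicator (fun s => M (gx s)) := by
    funext s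
    by_cases hs : s ∈ Ioo (0:ℝ) t
    · simp [hfdef, indicator_of_mem hs]
    · simp [hfdef, indicator_of_notMem hs, hM0]
  have hMfi : Integrable (fun s => M (f s)) μτ := by
    rw [hMf]
    exact ((hMgi.mono_set hsub).integrable_indicator measurableSet_Ioo).restrict
  have hfs : ∀ᵐ s ∂μτ, f s ∈ Sym3 := by
    refine Filter.Eventually.of_forall fun s => ?_
    by_cases hs : s ∈ Ioo (0:ℝ) t
    · simp only [hfdef, indicator_of_mem hs]; exact hgs s
    · simp only [hfdef, indicator_of_notMem hs]; exact sym3_zero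
  have hjensen : M (⨍ s, f s ∂μτ) ≤ ⨍ s, M (f s) ∂μτ :=
    hconv.map_average_le hcont isClosed_sym3 hfs hfi hMfi
  set B : Mat3 := ∫ s in Ioo (0:ℝ) t, gx s with hBdef
  have hμτuniv : (μτ univ).toReal = τ := by
    rw [hμτ, Measure.restrict_apply_univ, Real.volume_Ioo, sub_zero,
      ENNReal.toReal_ofReal hτpos.le]
  have hB : (∫ s, f s ∂μτ) = B := by
    rw [hμτ, hfdef, integral_indicator measurableSet_Ioo,
      Measure.restrict_restrict measurableSet_Ioo, inter_eq_self_of_subset_left hsubτ]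
  have havg : (⨍ s, f s ∂μτ) = τ⁻¹ • B := by
    rw [average_eq, measureReal_def, hμτuniv, hB]
  have hBsym : B ∈ Sym3 := by
    refine Matrix.IsSymm.ext fun i j => ?_
    rw [hBdef, integral_entry (hgi.mono_set hsub) j i,
      integral_entry (hgi.mono_set hsub) i j]
    exact integral_congr_ae (Filter.Eventually.of_forall fun s => (hgs s).apply i j)
  have havg_mem : (⨍ s, f s ∂μτ) ∈ Sym3 := by
    rw [havg]; exact sym3_smul hBsym
  have h2B : (2:ℝ) • B = ((2:ℝ)^(k+1)) • (⨍ s, f s ∂μτ) := by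
    rw [havg, smul_smul]
    congr 1
    rw [pow_succ, hτdef]
    field_simp
  have hiter := delta2_iter hc' hh hnn hd (k+1) _ havg_mem
  rw [← h2B] at hiter
  set GT : ℝ := ∫ s in Ioo (0:ℝ) T, M (gx s) with hGTdef
  have hGT0 : 0 ≤ GT := integral_nonneg fun s => hnn _
  have havgM : (⨍ s, M (f s) ∂μτ) = τ⁻¹ * ∫ s in Ioo (0:ℝ) t, M (gx s) := by
    rw [average_eq, measureReal_def, hμτuniv, smul_eq_mul, hMf, hμτ, integral_indicator measurableSet_Ioo,
      Measure.restrict_restrict measurableSet_Ioo, inter_eq_self_of_subset_left hsubτ]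
  have hle1 : (∫ s in Ioo (0:ℝ) t, M (gx s)) ≤ GT :=
    setIntegral_mono_set hMgi (Filter.Eventually.of_forall fun s => hnn _)
      (HasSubset.Subset.eventuallyLE hsub)
  have hMavg : M (⨍ s, f s ∂μτ) ≤ GT := by
    refine hjensen.trans ?_
    rw [havgM]
    have h0t : 0 ≤ ∫ s in Ioo (0:ℝ) t, M (gx s) := integral_nonneg fun s => hnn _
    calc τ⁻¹ * ∫ s in Ioo (0:ℝ) t, M (gx s) ≤ 1 * ∫ s in Ioo (0:ℝ) t, M (gx s) := by
          apply mul_le_mul_of_nonneg_right _ h0t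
          exact inv_le_one_of_one_le₀ hτ1
      _ = ∫ s in Ioo (0:ℝ) t, M (gx s) := one_mul _
      _ ≤ GT := hle1
  have hK1 : (1:ℝ) ≤ c'^(k+1) := one_le_pow₀ hc'
  have hK0 : (0:ℝ) ≤ c'^(k+1) := le_trans zero_le_one hK1
  have h2Bb : M ((2:ℝ) • B) ≤ c'^(k+1) * GT + (k+1:ℝ) * c'^(k+1) * hx := by
    refine hiter.trans ?_
    push_cast
    nlinarith [hMavg, hK0]
  have hcomb : a0x + B = (1/2:ℝ) • ((2:ℝ) • a0x) + (1/2:ℝ) • ((2:ℝ) • B) := by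
    rw [smul_smul, smul_smul]
    norm_num
  have hconvx := hconv.2 (sym3_smul (r := (2:ℝ)) ha0) (sym3_smul (r := (2:ℝ)) hBsym)
    (by norm_num : (0:ℝ) ≤ 1/2) (by norm_num : (0:ℝ) ≤ 1/2) (by norm_num : (1/2:ℝ) + 1/2 = 1)
  rw [← hcomb] at hconvx
  simp only [smul_eq_mul] at hconvx
  have hda0 := hd a0x ha0
  linarith



lemma const_bounds {C1 C2 C3 T Ih : ℝ} (hC1 : 0 ≤ C1) (hC2 : 0 ≤ C2) (hC3 : 0 ≤ C3)
    (hT : 0 < T) (hIh : 0 ≤ Ih) :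
    C1 * T ≤ (|T|+1) * (C1 + C2 * (|Ih|+1) + C3) ∧
    C2 * Ih * T ≤ (|T|+1) * (C1 + C2 * (|Ih|+1) + C3) ∧
    C3 * T ≤ (|T|+1) * (C1 + C2 * (|Ih|+1) + C3) := by
  have hTabs : T ≤ |T| := le_abs_self T
  have hIhabs : Ih ≤ |Ih| := le_abs_self Ih
  have hTa : (0:ℝ) ≤ |T| := abs_nonneg T
  have habs : (0:ℝ) ≤ |Ih| := abs_nonneg Ih
  have hT1 : (0:ℝ) ≤ |T| + 1 := by linarith
  have p1 : (0:ℝ) ≤ C2 * (|Ih| + 1) := mul_nonneg hC2 (by linarith)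
  have inner : (0:ℝ) ≤ (|T| + 1) * (|Ih| + 1) - Ih * T := by
    nlinarith [mul_le_mul hIhabs hTabs hT.le habs, hTa, habs]
  refine ⟨?_, ?_, ?_⟩
  · nlinarith [mul_nonneg hT1 p1, mul_nonneg hT1 hC3,
      mul_nonneg hC1 (show (0:ℝ) ≤ |T| + 1 - T by linarith)]
  · nlinarith [mul_nonneg hT1 hC1, mul_nonneg hT1 hC3, mul_nonneg hC2 inner]
  · nlinarith [mul_nonneg hT1 p1, mul_nonneg hT1 hC1,
      mul_nonneg hC3 (show (0:ℝ) ≤ |T| + 1 - T by linarith)]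

open scoped ENNReal in
/-- **Modular bound for accumulated strains**: if `M*` satisfies the `Δ₂`-condition with
constant `c` and function `h`, `∫_Ω M*(x,a₀) dx < ∞` and `∫_Q M*(x,g) dx dt < ∞`, then
for `a(x,t) = a₀(x) + ∫₀ᵗ g(x,s) ds`, there is `C` depending only on `c`, `T` and
`∫_Ω h dx` with `∫_Q M*(x,a) ≤ C (1 + ∫_Ω M*(x,a₀) + ∫_Q M*(x,g))`; in particular
`∫_Q M*(x,a) dx dt < ∞`. -/
theorem accumulated_strain_modular_bound (c T Ih : ℝ) :
    ∃ C : ℝ, 0 ≤ C ∧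
      ∀ (Ω : Set E3), IsOpen Ω → Bornology.IsBounded Ω → 0 < T →
      ∀ Mstar : E3 → Mat3 → ℝ, IsNFunction Ω Mstar →
      ∀ h : E3 → ℝ, (∀ x, 0 ≤ h x) → IntegrableOn h Ω → (∫ x in Ω, h x) = Ih →
      (∀ᵐ x ∂(volume.restrict Ω), ∀ ξ ∈ Sym3,
        Mstar x ((2 : ℝ) • ξ) ≤ c * Mstar x ξ + h x) →
      ∀ a0 : E3 → Mat3, Measurable a0 → (∀ x, a0 x ∈ Sym3) →
      (∫⁻ x in Ω, ENNReal.ofReal (Mstar x (a0 x)) < ⊤) →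
      ∀ g : E3 × ℝ → Mat3, Measurable g → (∀ q, g q ∈ Sym3) →
      (∫⁻ q in Ω ×ˢ Ioo (0:ℝ) T, ENNReal.ofReal (Mstar q.1 (g q)) < ⊤) →
      (∫⁻ q in Ω ×ˢ Ioo (0:ℝ) T,
          ENNReal.ofReal (Mstar q.1
            (a0 q.1 + Matrix.of fun j k => ∫ s in (0:ℝ)..q.2, g (q.1, s) j k)) ≤
        ENNReal.ofReal C *
          (1 + (∫⁻ x in Ω, ENNReal.ofReal (Mstar x (a0 x))) +
            ∫⁻ q in Ω ×ˢ Ioo (0:ℝ) T, ENNReal.ofReal (Mstar q.1 (g q)))) ∧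
      (∫⁻ q in Ω ×ˢ Ioo (0:ℝ) T,
          ENNReal.ofReal (Mstar q.1
            (a0 q.1 + Matrix.of fun j k => ∫ s in (0:ℝ)..q.2, g (q.1, s) j k)) < ⊤) := by
  classical
  set c' : ℝ := max c 1 with hc'def
  have hc'1 : (1:ℝ) ≤ c' := le_max_right _ _
  set k : ℕ := Nat.ceil |T| with hkdef
  set K : ℝ := c' ^ (k+1) with hKdef
  have hK1 : (1:ℝ) ≤ K := one_le_pow₀ hc'1
  have hK0 : (0:ℝ) ≤ K := zero_le_one.trans hK1
  set C1 : ℝ := c'/2 with hC1def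
  set C2 : ℝ := (1 + (k+1 : ℝ) * K)/2 with hC2def
  set C3 : ℝ := K/2 with hC3def
  have hC1 : 0 ≤ C1 := by positivity
  have hC2 : 0 ≤ C2 := by positivity
  have hC3 : 0 ≤ C3 := by positivity
  set C : ℝ := (|T|+1) * (C1 + C2 * (|Ih|+1) + C3) with hCdef
  have habs : 0 ≤ |Ih| := abs_nonneg _
  have hC0 : 0 ≤ C := by positivity
  refine ⟨C, hC0, ?_⟩
  intro Ω hΩopen _hΩbd hT Mstar hN h hh0 hhint hhIh hΔ a0 ha0m ha0s hIa0 g hgm hgs hIg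
  have hTk : T ≤ (2:ℝ)^k := by
    have h1 : T ≤ (k:ℝ) := (le_abs_self T).trans (Nat.le_ceil _)
    have h2 : (k:ℝ) ≤ (2:ℝ)^k := by
      have := (Nat.lt_two_pow_self (n := k)).le
      exact_mod_cast this
    linarith
  set μΩ : Measure E3 := volume.restrict Ω with hμΩ
  set νT : Measure ℝ := volume.restrict (Ioo (0:ℝ) T) with hνT
  set π : Measure (E3 × ℝ) := μΩ.prod νT with hπ
  haveI : IsFiniteMeasure νT := ⟨by
    rw [hνT, Measure.restrict_apply_univ]; exact measure_Ioo_lt_top⟩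
  have hπeq : (volume : Measure (E3 × ℝ)).restrict (Ω ×ˢ Ioo (0:ℝ) T) = π := by
    rw [hπ, hμΩ, hνT, Measure.prod_restrict, ← Measure.volume_eq_prod]
  have hνTuniv : νT univ = ENNReal.ofReal T := by
    rw [hνT, Measure.restrict_apply_univ, Real.volume_Ioo, sub_zero]
  -- measurability
  have hMa0meas : Measurable fun x => Mstar x (a0 x) :=
    measurable_mstar_comp hN.meas hN.cont measurable_id ha0m ha0s
  have hMgmeas : Measurable fun q : E3 × ℝ => Mstar q.1 (g q) :=
    measurable_mstar_comp hN.meas hN.cont measurable_fst hgm hgs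
  set Glin : E3 → ℝ≥0∞ := fun x => ∫⁻ s in Ioo (0:ℝ) T, ENNReal.ofReal (Mstar x (g (x, s)))
    with hGlin
  have hGlinmeas : Measurable Glin := by
    have hm : Measurable fun p : E3 × ℝ => ENNReal.ofReal (Mstar p.1 (g p)) :=
      ENNReal.measurable_ofReal.comp hMgmeas
    exact hm.lintegral_prod_right'
  set Ia0 : ℝ≥0∞ := ∫⁻ x in Ω, ENNReal.ofReal (Mstar x (a0 x)) with hIa0def
  set Igv : ℝ≥0∞ := ∫⁻ q in Ω ×ˢ Ioo (0:ℝ) T, ENNReal.ofReal (Mstar q.1 (g q)) with hIgdef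
  have hIg_prod : Igv = ∫⁻ x, Glin x ∂μΩ := by
    rw [hIgdef, hπeq]
    exact lintegral_prod _ (ENNReal.measurable_ofReal.comp hMgmeas).aemeasurable
  have hGfin : ∀ᵐ x ∂μΩ, Glin x < ⊤ :=
    ae_lt_top hGlinmeas (by rw [← hIg_prod]; exact hIg.ne)
  have qmp : Measure.QuasiMeasurePreserving (Prod.fst : E3 × ℝ → E3) π μΩ := by
    refine ⟨measurable_fst, ?_⟩
    rw [hπ, Measure.map_fst_prod]
    refine Measure.AbsolutelyContinuous.mk fun s _hs h0 => ?_
    simp [Measure.smul_apply, h0]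
  -- the integration-in-x helper
  have key : ∀ φ : E3 → ℝ≥0∞, AEMeasurable φ μΩ →
      (∫⁻ q, φ q.1 ∂π) = (∫⁻ x, φ x ∂μΩ) * ENNReal.ofReal T := by
    intro φ hφ
    have hφπ : AEMeasurable (fun q : E3 × ℝ => φ q.1) π :=
      hφ.comp_quasiMeasurePreserving qmp
    rw [hπ, lintegral_prod _ hφπ]
    simp only [lintegral_const]
    rw [hνTuniv]
    exact lintegral_mul_const' _ _ ENNReal.ofReal_ne_top
  -- good points
  set Px : E3 → Prop := fun x => x ∈ Ω ∧
      IntegrableOn (fun s => g (x, s)) (Ioo (0:ℝ) T) ∧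
      IntegrableOn (fun s => Mstar x (g (x, s))) (Ioo (0:ℝ) T) ∧
      ENNReal.ofReal (∫ s in Ioo (0:ℝ) T, Mstar x (g (x, s))) = Glin x ∧
      (∀ ξ ∈ Sym3, Mstar x ((2:ℝ) • ξ) ≤ c' * Mstar x ξ + h x) with hPx
  have haex : ∀ᵐ x ∂μΩ, Px x := by
    filter_upwards [ae_restrict_mem hΩopen.measurableSet, hΔ, hGfin] with x hx hdx hgfin
    have hslice : Measurable fun s => g (x, s) := hgm.comp measurable_prodMk_left
    have hmgx_meas : Measurable fun s => Mstar x (g (x, s)) :=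
      measurable_mstar_comp hN.meas hN.cont measurable_const hslice (fun s => hgs _)
    have hMgi : IntegrableOn (fun s => Mstar x (g (x, s))) (Ioo (0:ℝ) T) := by
      refine ⟨hmgx_meas.aestronglyMeasurable, ?_⟩
      rw [hasFiniteIntegral_iff_ofReal (Filter.Eventually.of_forall fun s => hN.nonneg _ _)]
      exact hgfin
    obtain ⟨R, hR0, hRb⟩ := exists_coercive (hN.nonneg x) (hN.tendsto_top x hx)
    have hgi : IntegrableOn (fun s => g (x, s)) (Ioo (0:ℝ) T) := by
      refine Integrable.mono' ((integrable_const R).add hMgi)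
        hslice.aestronglyMeasurable ?_
      exact Filter.Eventually.of_forall fun s => hRb _ (hgs _)
    refine ⟨hx, hgi, hMgi, ?_, ?_⟩
    · exact ofReal_integral_eq_lintegral_ofReal hMgi
        (Filter.Eventually.of_forall fun s => hN.nonneg _ _)
    · intro ξ hξ
      exact (hdx ξ hξ).trans (add_le_add_left
        (mul_le_mul_of_nonneg_right (le_max_left c 1) (hN.nonneg x ξ)) _)
  have haeq : ∀ᵐ q ∂π, Px q.1 := ae_fst haex
  have haet : ∀ᵐ q ∂π, q ∈ Ω ×ˢ Ioo (0:ℝ) T := by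
    rw [← hπeq]
    exact ae_restrict_mem (hΩopen.measurableSet.prod measurableSet_Ioo)
  -- pointwise bound
  have hptwise : ∀ᵐ q ∂π,
      ENNReal.ofReal (Mstar q.1
          (a0 q.1 + Matrix.of fun j k => ∫ s in (0:ℝ)..q.2, g (q.1, s) j k)) ≤
        ENNReal.ofReal (C1 * Mstar q.1 (a0 q.1)) +
          (ENNReal.ofReal (C2 * h q.1) + ENNReal.ofReal C3 * Glin q.1) := by
    filter_upwards [haeq, haet] with q hPq hQq
    obtain ⟨hx, hgi, hMgi, hofReal, hd'⟩ := hPq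
    obtain ⟨_, ht0, htT⟩ : q.1 ∈ Ω ∧ 0 < q.2 ∧ q.2 < T := by
      rcases hQq with ⟨h1, h2⟩; exact ⟨h1, h2.1, h2.2⟩
    have hm0 : Mstar q.1 0 = 0 := (hN.zero_iff q.1 hx 0 sym3_zero).mpr rfl
    have hBeq : (Matrix.of fun j k => ∫ s in (0:ℝ)..q.2, g (q.1, s) j k) =
        ∫ s in Ioo (0:ℝ) q.2, g (q.1, s) := by
      refine Matrix.ext fun j l => ?_
      rw [Matrix.of_apply, intervalIntegral.integral_of_le ht0.le,
        integral_Ioc_eq_integral_Ioo,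
        ← integral_entry (hgi.mono_set (Ioo_subset_Ioo_right htT.le)) j l]
    have hptw := pointwise_bound (M := Mstar q.1) hc'1 (hh0 q.1) (hN.nonneg q.1)
      (hN.convexOn q.1) (hN.cont q.1) hm0 hd' ht0 htT hTk
      (fun s => hgs _) hgi hMgi (ha0s q.1)
    calc ENNReal.ofReal (Mstar q.1
            (a0 q.1 + Matrix.of fun j l => ∫ s in (0:ℝ)..q.2, g (q.1, s) j l))
        ≤ ENNReal.ofReal (C1 * Mstar q.1 (a0 q.1) + C2 * h q.1 +
            C3 * ∫ s in Ioo (0:ℝ) T, Mstar q.1 (g (q.1, s))) := by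
          refine ENNReal.ofReal_le_ofReal ?_
          rw [hBeq]
          exact hptw
      _ ≤ ENNReal.ofReal (C1 * Mstar q.1 (a0 q.1) + C2 * h q.1) +
            ENNReal.ofReal (C3 * ∫ s in Ioo (0:ℝ) T, Mstar q.1 (g (q.1, s))) :=
          ENNReal.ofReal_add_le
      _ ≤ ENNReal.ofReal (C1 * Mstar q.1 (a0 q.1)) + ENNReal.ofReal (C2 * h q.1) +
            ENNReal.ofReal (C3 * ∫ s in Ioo (0:ℝ) T, Mstar q.1 (g (q.1, s))) :=
          add_le_add_left ENNReal.ofReal_add_le _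
      _ = ENNReal.ofReal (C1 * Mstar q.1 (a0 q.1)) +
            (ENNReal.ofReal (C2 * h q.1) + ENNReal.ofReal C3 * Glin q.1) := by
          rw [ENNReal.ofReal_mul hC3, hofReal, add_assoc]
  -- integrate
  have hmain : (∫⁻ q in Ω ×ˢ Ioo (0:ℝ) T,
      ENNReal.ofReal (Mstar q.1
        (a0 q.1 + Matrix.of fun j k => ∫ s in (0:ℝ)..q.2, g (q.1, s) j k))) ≤
      ENNReal.ofReal (C1*T) * Ia0 + (ENNReal.ofReal (C2*Ih*T) +
        ENNReal.ofReal (C3*T) * Igv) := by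
    rw [hπeq]
    refine (lintegral_mono_ae hptwise).trans ?_
    have hP1m : Measurable fun x => ENNReal.ofReal (C1 * Mstar x (a0 x)) :=
      ENNReal.measurable_ofReal.comp (hMa0meas.const_mul C1)
    have hP3m : Measurable fun x => ENNReal.ofReal C3 * Glin x :=
      hGlinmeas.const_mul _
    have hP2m : AEMeasurable (fun x => ENNReal.ofReal (C2 * h x)) μΩ :=
      ENNReal.measurable_ofReal.comp_aemeasurable
        (hhint.aemeasurable.const_smul C2)
    have hsplit : (∫⁻ q, (ENNReal.ofReal (C1 * Mstar q.1 (a0 q.1)) +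
        (ENNReal.ofReal (C2 * h q.1) + ENNReal.ofReal C3 * Glin q.1)) ∂π) =
        (∫⁻ q, ENNReal.ofReal (C1 * Mstar q.1 (a0 q.1)) ∂π) +
        ((∫⁻ q, ENNReal.ofReal (C2 * h q.1) ∂π) +
          (∫⁻ q, ENNReal.ofReal C3 * Glin q.1 ∂π)) := by
      have hP1m' : Measurable fun q : E3 × ℝ => ENNReal.ofReal (C1 * Mstar q.1 (a0 q.1)) :=
        hP1m.comp measurable_fst
      have hP2m' : AEMeasurable (fun q : E3 × ℝ => ENNReal.ofReal (C2 * h q.1)) π :=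
        hP2m.comp_quasiMeasurePreserving qmp
      rw [lintegral_add_left hP1m', lintegral_add_left' hP2m']
    rw [hsplit]
    have e1 : (∫⁻ q, ENNReal.ofReal (C1 * Mstar q.1 (a0 q.1)) ∂π) =
        ENNReal.ofReal (C1*T) * Ia0 := by
      rw [key _ hP1m.aemeasurable]
      have : (∫⁻ x, ENNReal.ofReal (C1 * Mstar x (a0 x)) ∂μΩ) =
          ENNReal.ofReal C1 * Ia0 := by
        rw [hIa0def, ← lintegral_const_mul' _ _ ENNReal.ofReal_ne_top]
        refine lintegral_congr fun x => ?_
        rw [ENNReal.ofReal_mul hC1]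
      rw [this, ENNReal.ofReal_mul hC1]
      ring
    have e2 : (∫⁻ q, ENNReal.ofReal (C2 * h q.1) ∂π) = ENNReal.ofReal (C2*Ih*T) := by
      rw [key _ hP2m]
      have hIhnn : 0 ≤ᵐ[μΩ] h := Filter.Eventually.of_forall hh0
      have : (∫⁻ x, ENNReal.ofReal (C2 * h x) ∂μΩ) = ENNReal.ofReal (C2 * Ih) := by
        have hint2 : Integrable (fun x => C2 * h x) μΩ := hhint.const_mul C2
        rw [← ofReal_integral_eq_lintegral_ofReal hint2
          (Filter.Eventually.of_forall fun x => mul_nonneg hC2 (hh0 x))]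
        rw [integral_const_mul, hhIh]
      rw [this, ← ENNReal.ofReal_mul (mul_nonneg hC2 (hhIh ▸ integral_nonneg hh0))]
    have e3 : (∫⁻ q, ENNReal.ofReal C3 * Glin q.1 ∂π) = ENNReal.ofReal (C3*T) * Igv := by
      rw [key _ hP3m.aemeasurable, lintegral_const_mul' _ _ ENNReal.ofReal_ne_top,
        ← hIg_prod, ENNReal.ofReal_mul hC3]
      ring
    rw [e1, e2, e3]
  -- final constant comparison
  have hIh0 : 0 ≤ Ih := hhIh ▸ integral_nonneg hh0
  obtain ⟨r1, r2, r3⟩ := const_bounds hC1 hC2 hC3 hT hIh0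
  have hfinal : ENNReal.ofReal (C1*T) * Ia0 + (ENNReal.ofReal (C2*Ih*T) +
      ENNReal.ofReal (C3*T) * Igv) ≤ ENNReal.ofReal C * (1 + Ia0 + Igv) := by
    have b1 : ENNReal.ofReal (C1*T) * Ia0 ≤ ENNReal.ofReal C * Ia0 :=
      mul_le_mul_left (ENNReal.ofReal_le_ofReal r1) _
    have b2 : ENNReal.ofReal (C2*Ih*T) ≤ ENNReal.ofReal C * 1 := by
      rw [mul_one]; exact ENNReal.ofReal_le_ofReal r2
    have b3 : ENNReal.ofReal (C3*T) * Igv ≤ ENNReal.ofReal C * Igv :=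
      mul_le_mul_left (ENNReal.ofReal_le_ofReal r3) _
    calc ENNReal.ofReal (C1*T) * Ia0 + (ENNReal.ofReal (C2*Ih*T) +
          ENNReal.ofReal (C3*T) * Igv)
        ≤ ENNReal.ofReal C * Ia0 + (ENNReal.ofReal C * 1 + ENNReal.ofReal C * Igv) :=
          add_le_add b1 (add_le_add b2 b3)
      _ = ENNReal.ofReal C * (1 + Ia0 + Igv) := by ring
  refine ⟨hmain.trans hfinal, ?_⟩
  refine lt_of_le_of_lt (hmain.trans hfinal) ?_
  refine ENNReal.mul_lt_top ENNReal.ofReal_lt_top ?_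
  exact lt_of_le_of_lt le_rfl (by
    have : (1 : ℝ≥0∞) + Ia0 + Igv < ⊤ := by
      refine ENNReal.add_lt_top.mpr ⟨ENNReal.add_lt_top.mpr ⟨ENNReal.one_lt_top, hIa0⟩, hIg⟩
    exact this)
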